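/- Let f : R^n → R be C^1 with L-Lipschitz gradient, Ω ⊆ R^n closed convex, x_k ∈ Ω, and suppose the polling set D_k is a Λ-PSS for B(x_k, α_k) ∩ Ω with ‖d‖ ≤ d_max·α_k for all d ∈ D_k. If π(x_k) ≠ 0 and α_k < min(2π(x_k)/((L·d_max² + σ)·Λ), 1), then there exists d ∈ D_k with x_k + d ∈ Ω and f(x_k + d) < f(x_k) − (σ/2)·α_k². -/

import Mathlib

open RealInnerProductSpace

theorem descent_aux {E : Type*} [NormedAddCommGroup E] [InnerProductSpace ℝ E]
    [CompleteSpace E]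
    (f : E → ℝ) (L : ℝ) (hf : ContDiff ℝ 1 f)
    (hlip : ∀ y z : E, ‖gradient f y - gradient f z‖ ≤ L * ‖y - z‖)
    (x u : E) : f (x + u) ≤ f x + ⟪gradient f x, u⟫ + L / 2 * ‖u‖ ^ 2 := by
  have hdiff := hf.differentiable one_ne_zero
  have hderiv : ∀ t : ℝ, HasDerivAt (fun s : ℝ => f (x + s • u))
      ⟪gradient f (x + t • u), u⟫ t := by
    intro t
    have hc : HasDerivAt (fun s : ℝ => x + s • u) u t := by
      simpa using ((hasDerivAt_id t).smul_const u).const_add x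
    have hg := (hdiff (x + t • u)).hasGradientAt
    have := hg.hasFDerivAt.comp_hasDerivAt t hc
    exact this.congr_deriv (by simp [gradient, InnerProductSpace.toDual_symm_apply])
  set φ : ℝ → ℝ := fun t => f x + t * ⟪gradient f x, u⟫ + L * ‖u‖ ^ 2 * t ^ 2 / 2
      - f (x + t • u) with hφ
  have hφd : ∀ t : ℝ, HasDerivAt φ
      (⟪gradient f x, u⟫ + L * ‖u‖ ^ 2 * t - ⟪gradient f (x + t • u), u⟫) t := by
    intro t
    have h1 : HasDerivAt (fun t : ℝ => f x + t * ⟪gradient f x, u⟫ + L * ‖u‖ ^ 2 * t ^ 2 / 2)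
        (⟪gradient f x, u⟫ + L * ‖u‖ ^ 2 * t) t := by
      have := (((hasDerivAt_id t).mul_const ⟪gradient f x, u⟫).const_add (f x)).add
        ((((hasDerivAt_pow 2 t).const_mul (L * ‖u‖ ^ 2)).div_const 2))
      exact this.congr_deriv (by rw [show (2:ℕ) - 1 = 1 from rfl]; push_cast; ring)
    exact h1.sub (hderiv t)
  have hmono : MonotoneOn φ (Set.Icc 0 1) := by
    apply monotoneOn_of_deriv_nonneg (convex_Icc 0 1)
    · exact fun t _ => ((hφd t).continuousAt).continuousWithinAt
    · intro t ht
      exact ((hφd t).differentiableAt).differentiableWithinAt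
    · intro t ht
      rw [interior_Icc] at ht
      rw [(hφd t).deriv]
      have hb : ⟪gradient f (x + t • u) - gradient f x, u⟫ ≤ L * ‖u‖ ^ 2 * t := by
        calc ⟪gradient f (x + t • u) - gradient f x, u⟫
            ≤ ‖gradient f (x + t • u) - gradient f x‖ * ‖u‖ :=
              real_inner_le_norm _ _
          _ ≤ (L * ‖x + t • u - x‖) * ‖u‖ := by
              apply mul_le_mul_of_nonneg_right (hlip _ _) (norm_nonneg _)
          _ = L * ‖u‖ ^ 2 * t := by
              rw [show x + t • u - x = t • u by abel, norm_smul]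
              simp [abs_of_nonneg ht.1.le]
              ring
      have := hb
      rw [inner_sub_left] at this
      linarith
  have h01 := hmono (Set.left_mem_Icc.2 zero_le_one) (Set.right_mem_Icc.2 zero_le_one) zero_le_one
  simp only [hφ] at h01
  simp only [zero_smul, add_zero, one_smul, zero_mul, one_mul, zero_pow, one_pow] at h01
  linarith

/-- Success of a polling step on a Λ-PSS for B(x,α) ∩ Ω: if f is C¹ with L-Lipschitz
gradient, Ω is closed convex, π(x) ≠ 0 and α < min(2π(x)/((L d_max² + σ)Λ), 1), then
some feasible poll point achieves sufficient decrease. -/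
theorem lambda_pss_success_constrained (n p : ℕ)
    (Ω : Set (EuclideanSpace ℝ (Fin n))) (hconv : Convex ℝ Ω) (hclosed : IsClosed Ω)
    (f : EuclideanSpace ℝ (Fin n) → ℝ) (L σ Λ dmax α : ℝ)
    (hL : 0 < L) (hσ : 0 < σ) (hΛ : 0 < Λ) (hdmax : 0 < dmax) (hα : 0 < α)
    (hf : ContDiff ℝ 1 f)
    (hlip : ∀ y z : EuclideanSpace ℝ (Fin n),
      ‖gradient f y - gradient f z‖ ≤ L * ‖y - z‖)
    (x : EuclideanSpace ℝ (Fin n)) (hx : x ∈ Ω)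
    (d : Fin p → EuclideanSpace ℝ (Fin n))
    (hfeas : ∀ i, x + d i ∈ Ω)
    (hPSS : ∀ v : EuclideanSpace ℝ (Fin n), x + v ∈ Ω → ‖v‖ ≤ α →
      ∃ c : Fin p → ℝ, (∀ i, 0 ≤ c i) ∧ v = ∑ i, c i • d i ∧ ∑ i, c i ≤ Λ)
    (hnorm : ∀ i, ‖d i‖ ≤ dmax * α)
    (π : ℝ)
    (hπ : π = |sInf {r : ℝ | ∃ v : EuclideanSpace ℝ (Fin n),
      x + v ∈ Ω ∧ ‖v‖ ≤ 1 ∧ r = ⟪gradient f x, v⟫}|)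
    (hπne : π ≠ 0)
    (hsmall : α < min (2 * π / ((L * dmax ^ 2 + σ) * Λ)) 1) :
    ∃ i, x + d i ∈ Ω ∧ f (x + d i) < f x - σ / 2 * α ^ 2 := by
  set g := gradient f x with hg
  clear_value g
  set S : Set ℝ := {r : ℝ | ∃ v : EuclideanSpace ℝ (Fin n),
      x + v ∈ Ω ∧ ‖v‖ ≤ 1 ∧ r = ⟪g, v⟫} with hS
  have h0S : (0 : ℝ) ∈ S := ⟨0, by simpa using hx, by simp, by simp⟩
  have hbdd : BddBelow S := by
    refine ⟨-‖g‖, fun r hr => ?_⟩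
    obtain ⟨v, _, hv1, hrv⟩ := hr
    have h1 : |⟪g, v⟫| ≤ ‖g‖ * ‖v‖ := abs_real_inner_le_norm g v
    have h2 : ‖g‖ * ‖v‖ ≤ ‖g‖ * 1 := mul_le_mul_of_nonneg_left hv1 (norm_nonneg _)
    have := neg_abs_le ⟪g, v⟫
    rw [hrv]; linarith
  have hinf0 : sInf S ≤ 0 := csInf_le hbdd h0S
  have hπ' : π = -sInf S := by rw [hπ, abs_of_nonpos hinf0]
  have hπpos : 0 < π := by
    have h0 : 0 ≤ π := by rw [hπ]; exact abs_nonneg _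
    exact h0.lt_of_ne (Ne.symm hπne)
  -- constants
  set C : ℝ := L * dmax ^ 2 + σ with hC
  clear_value C
  have hCpos : 0 < C := by rw [hC]; positivity
  have hα1 : α < 1 := lt_of_lt_of_le hsmall (min_le_right _ _)
  have hαbound : α * (C * Λ) / 2 < π := by
    have h1 : α < 2 * π / (C * Λ) := lt_of_lt_of_le hsmall (min_le_left _ _)
    have h2 : α * (C * Λ) < 2 * π := (lt_div_iff₀ (by positivity)).1 h1
    linarith only [h2]
  -- pick v near the infimum
  have hexists : ∃ r ∈ S, r < -(α * (C * Λ) / 2) := by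
    have hlt : sInf S < -(α * (C * Λ) / 2) := by
      have : -π < -(α * (C * Λ) / 2) := by linarith
      linarith [hπ'.symm.le]
    exact (csInf_lt_iff hbdd ⟨0, h0S⟩).1 hlt
  obtain ⟨r, ⟨v, hvΩ, hv1, hrv⟩, hrlt⟩ := hexists
  have hvinner : ⟪g, v⟫ < -(α * (C * Λ) / 2) := hrv ▸ hrlt
  -- scale v by α
  have hαvΩ : x + α • v ∈ Ω := by
    have : x + α • v = (1 - α) • x + α • (x + v) := by
      rw [smul_add]; module
    rw [this]
    exact hconv hx hvΩ (by linarith) hα.le (by ring)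
  have hαvnorm : ‖α • v‖ ≤ α := by
    rw [norm_smul, Real.norm_eq_abs, abs_of_pos hα]
    nlinarith
  obtain ⟨c, hc0, hcsum, hcΛ⟩ := hPSS (α • v) hαvΩ hαvnorm
  -- N = inner g (α v)
  set N : ℝ := α * ⟪g, v⟫ with hN
  clear_value N
  have hmul := mul_lt_mul_of_pos_left hvinner hα
  have hNneg : N < 0 := by
    have h4 : α * -(α * (C * Λ) / 2) ≤ 0 := by
      have : 0 ≤ α * (α * (C * Λ) / 2) := by positivity
      linarith
    rw [hN]; linarith
  have hNsum : N = ∑ i, c i * ⟪g, d i⟫ := by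
    have : ⟪g, α • v⟫ = N := by rw [real_inner_smul_right]; exact hN.symm
    rw [← this, hcsum, inner_sum]
    simp only [real_inner_smul_right]
  -- extract good index
  have hkey : ∃ i, ⟪g, d i⟫ ≤ N / Λ := by
    by_contra hcon
    push_neg at hcon
    -- some c j > 0
    have hj : ∃ j, 0 < c j := by
      by_contra hc
      push_neg at hc
      have hall : ∀ i, c i = 0 := fun i => le_antisymm (hc i) (hc0 i)
      rw [hNsum] at hNneg
      simp [hall] at hNneg
    obtain ⟨j, hjpos⟩ := hj
    have hstrict : ∑ i, (N / Λ) * c i < ∑ i, ⟪g, d i⟫ * c i := by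
      apply Finset.sum_lt_sum
      · intro i _
        exact mul_le_mul_of_nonneg_right (hcon i).le (hc0 i)
      · exact ⟨j, Finset.mem_univ j, mul_lt_mul_of_pos_right (hcon j) hjpos⟩
    have hsum1 : ∑ i, (N / Λ) * c i = (N / Λ) * ∑ i, c i := by
      rw [Finset.mul_sum]
    have hsum2 : ∑ i, ⟪g, d i⟫ * c i = N := by
      rw [hNsum]; congr 1; ext i; ring
    have hNΛ : N / Λ < 0 := div_neg_of_neg_of_pos hNneg hΛ
    have : (N / Λ) * Λ ≤ (N / Λ) * ∑ i, c i :=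
      mul_le_mul_of_nonpos_left hcΛ hNΛ.le
    rw [div_mul_cancel₀ _ hΛ.ne'] at this
    rw [hsum1, hsum2] at hstrict
    linarith
  obtain ⟨i, hi⟩ := hkey
  refine ⟨i, hfeas i, ?_⟩
  have hdesc := descent_aux f L hf hlip x (d i)
  rw [← hg] at hdesc
  have hdn : ‖d i‖ ^ 2 ≤ (dmax * α) ^ 2 := by
    have := hnorm i
    nlinarith [norm_nonneg (d i)]
  have hNΛbound : N / Λ < -(α ^ 2 * C / 2) := by
    have h5 : N < -(α ^ 2 * C / 2) * Λ := by
      have heq : α * -(α * (C * Λ) / 2) = -(α ^ 2 * C / 2) * Λ := by ring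
      rw [hN]; linarith
    exact (div_lt_iff₀ hΛ).2 h5
  have : f (x + d i) ≤ f x + ⟪g, d i⟫ + L / 2 * ‖d i‖ ^ 2 := hdesc
  have hlast : L / 2 * ‖d i‖ ^ 2 ≤ L / 2 * (dmax * α) ^ 2 :=
    mul_le_mul_of_nonneg_left hdn (by positivity)
  have : f (x + d i) < f x - α ^ 2 * C / 2 + L / 2 * (dmax * α) ^ 2 := by
    linarith
  calc f (x + d i) < f x - α ^ 2 * C / 2 + L / 2 * (dmax * α) ^ 2 := this
    _ = f x - σ / 2 * α ^ 2 := by rw [hC]; ring
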